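/- arXiv:1502.04741 — 5 statements merged into one kernel-verified Lean document; each statement's English description precedes it below -/
import Mathlib

section
/- Let G be a group acting freely on types A, B, C and D (i.e., g • x = x implies g = 1 for each of these actions). Let f : A → B, j : A → C, h : B → D, k : C → D be G-equivariant functions with h ∘ f = k ∘ j, and suppose this square is a pullback square of types. Then the induced square of orbit quotients A/G → B/G, A/G → C/G, B/G → D/G, C/G → D/G (with maps induced by f, j, h, k) is again a pullback square of types. -/
/-- The orbit quotient of a `G`-type. -/
def OrbitQuot (G : Type*) [Group G] (X : Type*) [MulAction G X] : Type _ :=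
  Quotient (MulAction.orbitRel G X)

/-- The map on orbit quotients induced by a `G`-equivariant map. -/
def orbitMap {G : Type*} [Group G] {X Y : Type*} [MulAction G X] [MulAction G Y]
    (f : X → Y) (hf : ∀ (g : G) (x : X), f (g • x) = g • f x) :
    OrbitQuot G X → OrbitQuot G Y :=
  Quotient.map f (by
    rintro x x' ⟨g, rfl⟩
    exact ⟨g, (hf g x').symm⟩)

/-- Passage to orbits of free actions of a group preserves pullback squares of types. -/
theorem orbit_quotient_pullback
    {G : Type*} [Group G] {A B C D : Type*}
    [MulAction G A] [MulAction G B] [MulAction G C] [MulAction G D]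
    (freeA : ∀ (g : G) (a : A), g • a = a → g = 1)
    (freeB : ∀ (g : G) (b : B), g • b = b → g = 1)
    (freeC : ∀ (g : G) (c : C), g • c = c → g = 1)
    (freeD : ∀ (g : G) (d : D), g • d = d → g = 1)
    (f : A → B) (j : A → C) (h : B → D) (k : C → D)
    (hf : ∀ (g : G) (a : A), f (g • a) = g • f a)
    (hj : ∀ (g : G) (a : A), j (g • a) = g • j a)
    (hh : ∀ (g : G) (b : B), h (g • b) = g • h b)
    (hk : ∀ (g : G) (c : C), k (g • c) = g • k c)
    (hcomm : h ∘ f = k ∘ j)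
    (hpb : ∀ (b : B) (c : C), h b = k c → ∃! a : A, f a = b ∧ j a = c) :
    (orbitMap h hh ∘ orbitMap f hf = orbitMap k hk ∘ orbitMap j hj) ∧
    ∀ (qb : OrbitQuot G B) (qc : OrbitQuot G C),
      orbitMap h hh qb = orbitMap k hk qc →
      ∃! qa : OrbitQuot G A, orbitMap f hf qa = qb ∧ orbitMap j hj qa = qc := by
  constructor
  · funext qa
    induction qa using Quotient.ind with
    | _ a =>
      show Quotient.mk _ (h (f a)) = Quotient.mk _ (k (j a))
      exact congrArg _ (congrFun hcomm a)
  · intro qb qc heq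
    induction qb using Quotient.ind with
    | _ b =>
    induction qc using Quotient.ind with
    | _ c =>
      obtain ⟨g, hg⟩ : ∃ g : G, g • k c = h b := Quotient.exact heq
      obtain ⟨a, ⟨hfa, hja⟩, huniq⟩ := hpb b (g • c) (by rw [hk]; exact hg.symm)
      refine ⟨Quotient.mk _ a, ⟨congrArg _ hfa, Quotient.sound ⟨g, hja.symm⟩⟩, ?_⟩
      intro qa' ⟨h1, h2⟩
      induction qa' using Quotient.ind with
      | _ a' =>
        obtain ⟨g1, hg1⟩ : ∃ g1 : G, g1 • b = f a' := Quotient.exact h1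
        obtain ⟨g2, hg2⟩ : ∃ g2 : G, g2 • c = j a' := Quotient.exact h2
        set a'' := g1⁻¹ • a' with ha''
        have hfa'' : f a'' = b := by
          rw [ha'', hf, ← hg1, smul_smul, inv_mul_cancel, one_smul]
        have hja'' : j a'' = (g1⁻¹ * g2) • c := by
          rw [ha'', hj, ← hg2, smul_smul]
        have hDeq : (g1⁻¹ * g2) • k c = g • k c := by
          have e1 : h (f a'') = k (j a'') := congrFun hcomm a''
          rw [hfa'', hja'', hk, ← hg] at e1
          exact e1.symm
        have hgeq : g1⁻¹ * g2 = g := by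
          have : (g⁻¹ * (g1⁻¹ * g2)) • k c = k c := by
            rw [mul_smul, hDeq, smul_smul, inv_mul_cancel, one_smul]
          have h1' := freeD _ _ this
          have := mul_eq_one_iff_inv_eq.mp h1'
          rw [inv_inv] at this
          exact this.symm ▸ rfl
        have : a'' = a := huniq a'' ⟨hfa'', by rw [hja'', hgeq]⟩
        refine Quotient.sound ⟨g1, ?_⟩
        show g1 • a = a'
        rw [← this, ha'', smul_smul, mul_inv_cancel, one_smul]
end

section
/- Let D : ℕ → Type be a family of types such that for each n, D n carries a free action of the symmetric group Equiv.Perm (Fin n). Then the associated endofunctor 𝔻 of types preserves pullbacks: for every pullback square of types f : A → B, j : A → C, h : B → Z, k : C → Z, the square 𝔻f : 𝔻A → 𝔻B, 𝔻j : 𝔻A → 𝔻C, 𝔻h : 𝔻B → 𝔻Z, 𝔻k : 𝔻C → 𝔻Z is again a pullback square of types. (This is the pullback-preservation part of the theorem that the monad associated to a Σ-free operad in Set is Cartesian.) -/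
/-- The relation on `D n × (Fin n → X)` identifying `(d, x)` with
`σ • (d, x) = (σ • d, x ∘ σ⁻¹)`. -/
def OpRel (D : ℕ → Type) [∀ n, MulAction (Equiv.Perm (Fin n)) (D n)] (X : Type) (n : ℕ)
    (p q : D n × (Fin n → X)) : Prop :=
  ∃ σ : Equiv.Perm (Fin n), σ • p.1 = q.1 ∧ p.2 ∘ σ.symm = q.2

/-- The endofunctor of types associated to a family `D` with symmetric group actions:
`𝔻 X := Σ n, (D n × (Fin n → X)) / Perm (Fin n)`. -/
def DD (D : ℕ → Type) [∀ n, MulAction (Equiv.Perm (Fin n)) (D n)] (X : Type) : Type :=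
  Σ n : ℕ, Quot (OpRel D X n)

/-- The action of the endofunctor `𝔻` on functions, induced by `(d, x) ↦ (d, f ∘ x)`. -/
def DDmap (D : ℕ → Type) [∀ n, MulAction (Equiv.Perm (Fin n)) (D n)] {X Y : Type}
    (f : X → Y) : DD D X → DD D Y :=
  fun a => ⟨a.1, Quot.map (fun p => (p.1, f ∘ p.2))
    (fun p q hpq => by
      obtain ⟨σ, h1, h2⟩ := hpq
      exact ⟨σ, h1, congrArg (fun u => f ∘ u) h2⟩) a.2⟩

/-- A commutative square of types which is a pullback square:  for all compatible pairs
in the two middle corners there is a unique element of the top corner mapping to them. -/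
def IsPB {A B C Z : Type*} (f : A → B) (j : A → C) (h : B → Z) (k : C → Z) : Prop :=
  (∀ a, h (f a) = k (j a)) ∧ ∀ (b : B) (c : C), h b = k c → ∃! a : A, f a = b ∧ j a = c

theorem opRel_equiv (D : ℕ → Type) [∀ n, MulAction (Equiv.Perm (Fin n)) (D n)] (X : Type)
    (n : ℕ) : Equivalence (OpRel D X n) where
  refl p := ⟨1, one_smul _ _, by funext i; rfl⟩
  symm := fun ⟨σ, h1, h2⟩ => ⟨σ⁻¹, by rw [← h1, inv_smul_smul], by
    rw [← h2]; funext i; simp [Equiv.Perm.inv_def]⟩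
  trans := fun ⟨σ, h1, h2⟩ ⟨τ, h3, h4⟩ => ⟨τ * σ, by rw [mul_smul, h1, h3], by
    rw [← h4, ← h2]; funext i; simp [Equiv.Perm.inv_def, Equiv.Perm.mul_def]⟩

theorem opRel_exact (D : ℕ → Type) [∀ n, MulAction (Equiv.Perm (Fin n)) (D n)] (X : Type)
    (n : ℕ) {p q : D n × (Fin n → X)}
    (hpq : Quot.mk (OpRel D X n) p = Quot.mk (OpRel D X n) q) : OpRel D X n p q :=
  ((opRel_equiv D X n).eqvGen_iff).mp (Quot.eq.mp hpq)

/-- The endofunctor associated to a Σ-free family preserves pullback squares of types. -/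
theorem DD_preserves_pullbacks (D : ℕ → Type) [∀ n, MulAction (Equiv.Perm (Fin n)) (D n)]
    (free : ∀ (n : ℕ) (σ : Equiv.Perm (Fin n)) (d : D n), σ • d = d → σ = 1)
    {A B C Z : Type} (f : A → B) (j : A → C) (h : B → Z) (k : C → Z)
    (hpb : IsPB f j h k) :
    IsPB (DDmap D f) (DDmap D j) (DDmap D h) (DDmap D k) := by
  obtain ⟨hcomm, hex⟩ := hpb
  constructor
  · rintro ⟨n, a⟩
    induction a using Quot.ind with
    | _ p =>
      show (⟨n, Quot.mk _ (p.1, h ∘ f ∘ p.2)⟩ : DD D Z) = ⟨n, Quot.mk _ (p.1, k ∘ j ∘ p.2)⟩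
      have : h ∘ f ∘ p.2 = k ∘ j ∘ p.2 := by funext i; exact hcomm (p.2 i)
      rw [this]
  · rintro ⟨n, qb⟩ ⟨m, qc⟩ heq
    induction qb using Quot.ind with
    | _ p =>
    induction qc using Quot.ind with
    | _ q =>
      obtain ⟨d, x⟩ := p
      obtain ⟨e, y⟩ := q
      have heq' : (⟨n, Quot.mk _ (d, h ∘ x)⟩ : DD D Z) = ⟨m, Quot.mk _ (e, k ∘ y)⟩ := heq
      rw [Sigma.mk.inj_iff] at heq'
      obtain ⟨hn, hq⟩ := heq'
      subst hn
      rw [heq_iff_eq] at hq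
      obtain ⟨σ, hσ1, hσ2⟩ := opRel_exact D Z n hq
      -- hσ1 : σ • d = e, hσ2 : (h ∘ x) ∘ σ.symm = k ∘ y
      have hcompat : ∀ i : Fin n, h (x (σ.symm i)) = k (y i) := fun i => congrFun hσ2 i
      have key : ∀ i : Fin n, ∃ a : A, (f a = x (σ.symm i) ∧ j a = y i) ∧
          ∀ a' : A, f a' = x (σ.symm i) → j a' = y i → a' = a := by
        intro i
        obtain ⟨a, ⟨h1, h2⟩, hu⟩ := hex (x (σ.symm i)) (y i) (hcompat i)
        exact ⟨a, ⟨h1, h2⟩, fun a' u v => hu a' ⟨u, v⟩⟩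
      choose a ha hauniq using key
      have ha1 : ∀ i, f (a i) = x (σ.symm i) := fun i => (ha i).1
      have ha2 : ∀ i, j (a i) = y i := fun i => (ha i).2
      refine ⟨⟨n, Quot.mk _ (e, a)⟩, ⟨?_, ?_⟩, ?_⟩
      · show (⟨n, Quot.mk _ (e, f ∘ a)⟩ : DD D B) = ⟨n, Quot.mk _ (d, x)⟩
        have : f ∘ a = x ∘ σ.symm := by funext i; exact ha1 i
        rw [this]
        exact congrArg (fun u => (⟨n, u⟩ : DD D B)) (Quot.sound ⟨σ, hσ1, rfl⟩).symm
      · show (⟨n, Quot.mk _ (e, j ∘ a)⟩ : DD D C) = ⟨n, Quot.mk _ (e, y)⟩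
        have : j ∘ a = y := by funext i; exact ha2 i
        rw [this]
      · rintro ⟨n', q'⟩ ⟨hf, hj⟩
        induction q' using Quot.ind with
        | _ r =>
          obtain ⟨d', w⟩ := r
          have hf' : (⟨n', Quot.mk _ (d', f ∘ w)⟩ : DD D B) = ⟨n, Quot.mk _ (d, x)⟩ := hf
          have hj' : (⟨n', Quot.mk _ (d', j ∘ w)⟩ : DD D C) = ⟨n, Quot.mk _ (e, y)⟩ := hj
          rw [Sigma.mk.inj_iff] at hf' hj'
          obtain ⟨hn', hq1⟩ := hf'
          subst hn'
          rw [heq_iff_eq] at hq1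
          obtain ⟨-, hq2⟩ := hj'
          rw [heq_iff_eq] at hq2
          obtain ⟨σ₁, hσ₁1, hσ₁2⟩ := opRel_exact D B _ hq1
          obtain ⟨σ₂, hσ₂1, hσ₂2⟩ := opRel_exact D C _ hq2
          -- σ₂ = σ * σ₁ by freeness
          have hfix : ((σ * σ₁)⁻¹ * σ₂) • d' = d' := by
            rw [mul_smul, hσ₂1, ← hσ1, ← hσ₁1, ← mul_smul, ← mul_smul, mul_assoc, inv_mul_cancel, one_smul]
          have hστ : σ₂ = σ * σ₁ := by
            have := free _ _ _ hfix
            rw [inv_mul_eq_one] at this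
            exact this.symm
          have hw : w ∘ σ₂.symm = a := by
            funext i
            refine hauniq i (w (σ₂.symm i)) ?_ ?_
            · have : σ₂.symm i = σ₁.symm (σ.symm i) := by
                rw [hστ]; simp [Equiv.Perm.inv_def, Equiv.Perm.mul_def]
              rw [this]
              exact congrFun hσ₁2 (σ.symm i)
            · exact congrFun hσ₂2 i
          have : Quot.mk (OpRel D A _) (d', w) = Quot.mk _ (e, a) :=
            Quot.sound ⟨σ₂, hσ₂1, hw⟩
          exact congrArg (fun u => (⟨_, u⟩ : DD D A)) this
end

section
/- Let D : ℕ → Type be a family of types such that for each n, D n carries a free action of Equiv.Perm (Fin n), and let e : D 1 be a distinguished element. For each type X define the unit η_X : X → 𝔻X by η_X x = ⟨1, class of (e, fun _ => x)⟩. Then for every function f : X → Y, the naturality square of η at f — with horizontal maps η_X : X → 𝔻X and η_Y : Y → 𝔻Y and vertical maps f and 𝔻f (so that η_Y ∘ f = 𝔻f ∘ η_X) — is a pullback square of types. (This is the unit part of the theorem that the monad associated to a Σ-free operad in Set is Cartesian.) -/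
/-- The unit `η_X : X → 𝔻X` determined by a distinguished element `e : D 1`. -/
def DDunit (D : ℕ → Type) [∀ n, MulAction (Equiv.Perm (Fin n)) (D n)] (e : D 1)
    (X : Type) : X → DD D X :=
  fun x => ⟨1, Quot.mk _ (e, fun _ => x)⟩

lemma OpRel_equiv (D : ℕ → Type) [∀ n, MulAction (Equiv.Perm (Fin n)) (D n)] (X : Type)
    (n : ℕ) : Equivalence (OpRel D X n) := by
  constructor
  · intro p; exact ⟨1, one_smul _ _, by ext i; simp [Equiv.Perm.one_symm]⟩
  · rintro p q ⟨σ, h1, h2⟩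
    refine ⟨σ⁻¹, by rw [← h1, inv_smul_smul], ?_⟩
    ext i
    have := congrFun h2 (σ i)
    simp only [Function.comp_apply, Equiv.symm_apply_apply] at this
    simpa [Equiv.Perm.inv_def] using this.symm
  · rintro p q r ⟨σ, h1, h2⟩ ⟨τ, h3, h4⟩
    refine ⟨τ * σ, by rw [mul_smul, h1, h3], ?_⟩
    ext i
    have h5 := congrFun h4 i
    rw [← h5]
    have := congrFun h2 (τ.symm i)
    simpa [Equiv.Perm.mul_def] using this

lemma OpRel_of_quot_eq (D : ℕ → Type) [∀ n, MulAction (Equiv.Perm (Fin n)) (D n)] (X : Type)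
    (n : ℕ) {p q : D n × (Fin n → X)}
    (h : Quot.mk (OpRel D X n) p = Quot.mk (OpRel D X n) q) : OpRel D X n p q := by
  have hh := Quot.eqvGen_exact h
  clear h
  induction hh with
  | rel _ _ h => exact h
  | refl _ => exact (OpRel_equiv D X n).refl _
  | symm _ _ _ ih => exact (OpRel_equiv D X n).symm ih
  | trans _ _ _ _ _ ih1 ih2 => exact (OpRel_equiv D X n).trans ih1 ih2

/-- The naturality squares of the unit of the monad associated to a Σ-free operad in `Set`
are pullbacks. -/
theorem DD_unit_naturality_pullback (D : ℕ → Type)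
    [∀ n, MulAction (Equiv.Perm (Fin n)) (D n)]
    (free : ∀ (n : ℕ) (σ : Equiv.Perm (Fin n)) (d : D n), σ • d = d → σ = 1)
    (e : D 1) {X Y : Type} (f : X → Y) :
    IsPB (DDunit D e X) f (DDmap D f) (DDunit D e Y) := by
  constructor
  · intro x; rfl
  · rintro ⟨n, q⟩ c h
    have hn : n = 1 := congrArg Sigma.fst h
    subst hn
    induction q using Quot.ind with
    | _ p =>
      obtain ⟨d, v⟩ := p
      have h2 : Quot.mk (OpRel D Y 1) (d, f ∘ v) = Quot.mk (OpRel D Y 1) (e, fun _ => c) :=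
        eq_of_heq (Sigma.mk.inj_iff.mp h).2
      obtain ⟨σ, hσ1, hσ2⟩ := OpRel_of_quot_eq D Y 1 h2
      have hσ : σ = 1 := Subsingleton.elim _ _
      subst hσ
      simp only [one_smul] at hσ1
      have hc : f (v 0) = c := by
        have := congrFun hσ2 0
        simpa [Equiv.Perm.one_symm] using this
      refine ⟨v 0, ⟨?_, hc⟩, ?_⟩
      · have hv : v = fun _ => v 0 := funext fun i => congrArg v (Subsingleton.elim _ _)
        rw [← hσ1]
        show (⟨1, Quot.mk _ (d, fun _ => v 0)⟩ : DD D X) = ⟨1, Quot.mk _ (d, v)⟩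
        exact congrArg (fun w => (⟨1, Quot.mk _ (d, w)⟩ : DD D X)) hv.symm
      · rintro x ⟨hx1, -⟩
        have h3 : Quot.mk (OpRel D X 1) (e, fun _ => x) = Quot.mk (OpRel D X 1) (d, v) :=
          eq_of_heq (Sigma.mk.inj_iff.mp hx1).2
        obtain ⟨τ, -, hτ2⟩ := OpRel_of_quot_eq D X 1 h3
        exact congrFun hτ2 0
end

section
/- Let D : ℕ → Type carry, for each n, a free action of Equiv.Perm (Fin n), together with operad composition maps γ : for every k and every n : Fin k → ℕ, a map D k × (∀ i, D (n i)) → D (∑ i, n i), satisfying the equivariance axioms of a symmetric operad in Set: (i) composing a permuted operation (a acted on by σ : Perm (Fin k)) with inputs b is the composite of a with the correspondingly permuted inputs, acted on by the block permutation σ⟨n₁,…,n_k⟩ of Fin (∑ i, n i) that permutes the blocks of sizes n i as σ permutes Fin k (conjugating the sigma-type permutation by the equivalence (Σ i, Fin (n i)) ≃ Fin (∑ i, n i)); (ii) composing a with inputs b i each acted on by τ_i : Perm (Fin (n i)) equals γ(a; b) acted on by the block sum τ₁ ⊕ ⋯ ⊕ τ_k. Then: the multiplication μ_X : 𝔻(𝔻X)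 → 𝔻X, sending the class of (a, (⟨n i, class of (b i, x i)⟩)_{i : Fin k}) to ⟨∑ i, n i, class of (γ(a; b), the concatenation of the tuples x i along the equivalence (Σ i, Fin (n i)) ≃ Fin (∑ i, n i))⟩, is well-defined on the iterated quotients, and for every function f : X → Y the naturality square of μ at f — horizontal maps μ_X and μ_Y, vertical maps 𝔻(𝔻f) and 𝔻f — is a pullback square of types. (This is the multiplication part of the theorem that the monad associated to a Σ-free operad in Set is Cartesian.) -/
/-- `Σ i : Fin (k+1), β i ≃ β 0 ⊕ Σ i : Fin k, β i.succ`. -/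
def sigmaFinSucc {k : ℕ} (β : Fin (k + 1) → Type*) :
    (Σ i : Fin (k + 1), β i) ≃ (β 0 ⊕ Σ i : Fin k, β i.succ) where
  toFun p := Fin.cases (motive := fun i => β i → (β 0 ⊕ Σ i : Fin k, β i.succ))
    (fun b => Sum.inl b) (fun i b => Sum.inr ⟨i, b⟩) p.1 p.2
  invFun s := Sum.elim (fun b => ⟨0, b⟩) (fun q => ⟨q.1.succ, q.2⟩) s
  left_inv := by
    rintro ⟨i, b⟩
    induction i using Fin.cases with
    | zero => simp
    | succ i => simp
  right_inv := by
    rintro (b | ⟨i, b⟩) <;> simp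

/-- The canonical order-respecting equivalence `(Σ i, Fin (n i)) ≃ Fin (∑ i, n i)`,
concatenating the blocks `Fin (n 0), Fin (n 1), …` in order. -/
def finSigmaEquiv : ∀ {k : ℕ} (n : Fin k → ℕ), (Σ i : Fin k, Fin (n i)) ≃ Fin (∑ i, n i)
  | 0, n => (Equiv.equivOfIsEmpty _ (Fin 0)).trans (finCongr (by simp))
  | k + 1, n =>
    ((sigmaFinSucc fun i => Fin (n i)).trans
      ((Equiv.refl (Fin (n 0))).sumCongr (finSigmaEquiv fun i : Fin k => n i.succ))).trans
      (finSumFinEquiv.trans (finCongr (Fin.sum_univ_succ n).symm))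

/-- The block permutation `σ⟨n 0, …, n (k-1)⟩` of `Fin (∑ i, n i)` permuting the blocks of
sizes `n i` as `σ` permutes `Fin k`, obtained by conjugating the sigma-type permutation by
the equivalence `(Σ i, Fin (n i)) ≃ Fin (∑ i, n i)`. -/
def blockPerm {k : ℕ} (σ : Equiv.Perm (Fin k)) (n : Fin k → ℕ) :
    Equiv.Perm (Fin (∑ i, n i)) :=
  ((finCongr (Equiv.sum_comp σ n).symm).trans
      (finSigmaEquiv fun i => n (σ i)).symm).trans
    ((Equiv.sigmaCongrLeft (β := fun i => Fin (n i)) (σ : Fin k ≃ Fin k)).trans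
      (finSigmaEquiv n))

/-- The block sum `τ 0 ⊕ ⋯ ⊕ τ (k-1)` of permutations `τ i` of `Fin (n i)`, as a
permutation of `Fin (∑ i, n i)`. -/
def blockSum {k : ℕ} {n : Fin k → ℕ} (τ : ∀ i, Equiv.Perm (Fin (n i))) :
    Equiv.Perm (Fin (∑ i, n i)) :=
  ((finSigmaEquiv n).symm.trans (Equiv.sigmaCongrRight τ)).trans (finSigmaEquiv n)

section Aux

variable (D : ℕ → Type) [∀ n, MulAction (Equiv.Perm (Fin n)) (D n)] (X : Type)

theorem opRel_equivalence (n : ℕ) : Equivalence (OpRel D X n) where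
  refl p := ⟨1, one_smul _ _, by funext j; simp [Equiv.Perm.one_def]⟩
  symm := by
    rintro p q ⟨σ, h1, h2⟩
    refine ⟨σ⁻¹, by rw [← h1, inv_smul_smul], ?_⟩
    funext j
    have := congrFun h2 (σ j)
    simp only [Function.comp] at this ⊢
    simp only [Equiv.Perm.inv_def, Equiv.symm_symm]
    rw [← this, Equiv.symm_apply_apply]
  trans := by
    rintro p q r ⟨σ, h1, h2⟩ ⟨τ, h3, h4⟩
    refine ⟨τ * σ, by rw [mul_smul, h1, h3], ?_⟩
    funext j
    have h2' := congrFun h2 (τ.symm j)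
    have h4' := congrFun h4 j
    simp only [Function.comp] at h2' h4' ⊢
    rw [← h4', ← h2']
    rfl

theorem quot_mk_eq_iff {n : ℕ} (p q : D n × (Fin n → X)) :
    Quot.mk (OpRel D X n) p = Quot.mk (OpRel D X n) q ↔ OpRel D X n p q :=
  ⟨fun h => (opRel_equivalence D X n).eqvGen_iff.mp (Quot.eq.mp h), Quot.sound⟩

def concatX {k : ℕ} (n : Fin k → ℕ) (x : ∀ i, Fin (n i) → X) : Fin (∑ i, n i) → X :=
  fun j => x ((finSigmaEquiv n).symm j).1 ((finSigmaEquiv n).symm j).2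

def blockX {k : ℕ} (n : Fin k → ℕ) (x : Fin (∑ i, n i) → X) (i : Fin k) : Fin (n i) → X :=
  fun u => x (finSigmaEquiv n ⟨i, u⟩)

theorem concat_block {k : ℕ} (n : Fin k → ℕ) (x : Fin (∑ i, n i) → X) :
    concatX X n (blockX X n x) = x := by
  funext j
  simp [concatX, blockX, Sigma.eta]

theorem block_concat {k : ℕ} (n : Fin k → ℕ) (x : ∀ i, Fin (n i) → X) :
    blockX X n (concatX X n x) = x := by
  funext i u
  show x ((finSigmaEquiv n).symm ((finSigmaEquiv n) ⟨i, u⟩)).1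
      ((finSigmaEquiv n).symm ((finSigmaEquiv n) ⟨i, u⟩)).2 = x i u
  exact congrArg (fun t : Σ i, Fin (n i) => x t.1 t.2) (Equiv.symm_apply_apply _ _)

theorem dd_eq_of {m₁ m₂ : ℕ} (h : m₁ = m₂) (d₁ : D m₁) (x₁ : Fin m₁ → X) (d₂ : D m₂)
    (x₂ : Fin m₂ → X) (σ : Equiv.Perm (Fin m₂))
    (hd : σ • cast (congrArg D h) d₁ = d₂)
    (hx : (fun j => x₁ ((finCongr h).symm (σ.symm j))) = x₂) :
    (⟨m₁, Quot.mk _ (d₁, x₁)⟩ : DD D X) = ⟨m₂, Quot.mk _ (d₂, x₂)⟩ := by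
  subst h
  refine congrArg (fun q => (⟨m₁, q⟩ : DD D X)) (Quot.sound ⟨σ, ?_, ?_⟩)
  · simpa using hd
  · funext j
    simpa using congrFun hx j

theorem ddmap_eq_mk {X Y : Type} (f : X → Y) (w : DD D X) (m : ℕ) (d : D m) (y : Fin m → Y)
    (h : DDmap D f w = ⟨m, Quot.mk _ (d, y)⟩) :
    ∃ ζ : Fin m → X, w = ⟨m, Quot.mk _ (d, ζ)⟩ ∧ f ∘ ζ = y := by
  obtain ⟨m', q⟩ := w
  obtain ⟨⟨e, ξ⟩, rfl⟩ := q.exists_rep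
  have hm : m' = m := congrArg Sigma.fst h
  subst hm
  have h2 : Quot.mk (OpRel D Y m') (e, f ∘ ξ) = Quot.mk _ (d, y) :=
    eq_of_heq (Sigma.ext_iff.mp h).2
  obtain ⟨τ, hτ1, hτ2⟩ := (quot_mk_eq_iff D Y _ _).mp h2
  refine ⟨ξ ∘ τ.symm, ?_, hτ2⟩
  refine congrArg (fun q => (⟨m', q⟩ : DD D X)) (Quot.sound ⟨τ, hτ1, rfl⟩)

theorem decomp {k : ℕ} (y : Fin k → DD D X) :
    ∃ (n : Fin k → ℕ) (b : ∀ i, D (n i)) (x : ∀ i, Fin (n i) → X),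
      y = fun i => ⟨n i, Quot.mk _ (b i, x i)⟩ := by
  refine ⟨fun i => (y i).1, fun i => ((y i).2.out).1, fun i => ((y i).2.out).2,
    funext fun i => ?_⟩
  exact (congrArg (fun q => ((⟨(y i).1, q⟩ : DD D X))) ((y i).2.out_eq)).symm

end Aux

section Mu

variable (D : ℕ → Type) [∀ n, MulAction (Equiv.Perm (Fin n)) (D n)]
variable (γ : ∀ (k : ℕ) (n : Fin k → ℕ), D k × (∀ i, D (n i)) → D (∑ i, n i))

theorem concat_apply (X : Type) {k : ℕ} (n : Fin k → ℕ) (x : ∀ i, Fin (n i) → X)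
    (t : Σ i, Fin (n i)) : concatX X n x (finSigmaEquiv n t) = x t.1 t.2 := by
  show x ((finSigmaEquiv n).symm ((finSigmaEquiv n) t)).1
      ((finSigmaEquiv n).symm ((finSigmaEquiv n) t)).2 = x t.1 t.2
  exact congrArg (fun t : Σ i, Fin (n i) => x t.1 t.2) (Equiv.symm_apply_apply _ _)

def mkRes (X : Type) {k : ℕ} (a : D k) (n : Fin k → ℕ) (b : ∀ i, D (n i))
    (x : ∀ i, Fin (n i) → X) : DD D X :=
  ⟨∑ i, n i, Quot.mk _ (γ k n (a, b), concatX X n x)⟩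

theorem mkRes_inner
    (γ_perm_right : ∀ (k : ℕ) (n : Fin k → ℕ) (τ : ∀ i, Equiv.Perm (Fin (n i)))
        (a : D k) (b : ∀ i, D (n i)),
      γ k n (a, fun i => τ i • b i) = blockSum τ • γ k n (a, b))
    (X : Type) {k : ℕ} (a : D k) (n : Fin k → ℕ)
    (b b' : ∀ i, D (n i)) (x x' : ∀ i, Fin (n i) → X)
    (hrel : ∀ i, OpRel D X (n i) (b i, x i) (b' i, x' i)) :
    mkRes D γ X a n b x = mkRes D γ X a n b' x' := by
  choose τ h1 h2 using hrel
  have hb : b' = fun i => τ i • b i := funext fun i => (h1 i).symm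
  have hx : x' = fun i => x i ∘ (τ i).symm := funext fun i => (h2 i).symm
  subst hb hx
  refine congrArg (fun q => (⟨∑ i, n i, q⟩ : DD D X)) (Quot.sound ⟨blockSum τ, ?_, ?_⟩)
  · exact (γ_perm_right k n τ a b).symm
  · funext j
    show concatX X n x ((blockSum τ).symm j) = _
    rw [show (blockSum τ).symm j =
      finSigmaEquiv n ((Equiv.sigmaCongrRight τ).symm ((finSigmaEquiv n).symm j)) from rfl]
    rw [concat_apply]
    rfl

theorem mkRes_outer
    (γ_perm_left : ∀ (k : ℕ) (n : Fin k → ℕ) (σ : Equiv.Perm (Fin k))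
        (a : D k) (b : ∀ i, D (n i)),
      γ k n (σ • a, b) =
        blockPerm σ n • (cast (congrArg D (Equiv.sum_comp σ n))
          (γ k (fun i => n (σ i)) (a, fun i => b (σ i)))))
    (X : Type) {k : ℕ} (σ : Equiv.Perm (Fin k))
    (a : D k) (n : Fin k → ℕ) (b : ∀ i, D (n i)) (x : ∀ i, Fin (n i) → X) :
    mkRes D γ X a (fun i => n (σ i)) (fun i => b (σ i)) (fun i => x (σ i)) =
      mkRes D γ X (σ • a) n b x := by
  refine dd_eq_of D X (Equiv.sum_comp σ n) _ _ _ _ (blockPerm σ n)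
    (γ_perm_left k n σ a b).symm ?_
  funext j
  have e1 : (finCongr (Equiv.sum_comp σ n)).symm ((blockPerm σ n).symm j)
      = finSigmaEquiv (fun i => n (σ i))
          ((Equiv.sigmaCongrLeft (β := fun i => Fin (n i)) (σ : Fin k ≃ Fin k)).symm
            ((finSigmaEquiv n).symm j)) :=
    Equiv.symm_apply_apply (finCongr (Equiv.sum_comp σ n)) _
  show concatX X (fun i => n (σ i)) (fun i => x (σ i))
      ((finCongr (Equiv.sum_comp σ n)).symm ((blockPerm σ n).symm j)) = concatX X n x j
  rw [e1, concat_apply]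
  show (fun u : Σ i, Fin (n i) => x u.1 u.2)
      ((Equiv.sigmaCongrLeft (β := fun i => Fin (n i)) (σ : Fin k ≃ Fin k))
        ((Equiv.sigmaCongrLeft (β := fun i => Fin (n i)) (σ : Fin k ≃ Fin k)).symm
          ((finSigmaEquiv n).symm j))) = concatX X n x j
  rw [Equiv.apply_symm_apply]
  rfl

noncomputable def muRaw (X : Type) (k : ℕ) (p : D k × (Fin k → DD D X)) : DD D X :=
  mkRes D γ X p.1 (fun i => (p.2 i).1) (fun i => ((p.2 i).2.out).1)
    (fun i => ((p.2 i).2.out).2)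

theorem muRaw_wd
    (γ_perm_left : ∀ (k : ℕ) (n : Fin k → ℕ) (σ : Equiv.Perm (Fin k))
        (a : D k) (b : ∀ i, D (n i)),
      γ k n (σ • a, b) =
        blockPerm σ n • (cast (congrArg D (Equiv.sum_comp σ n))
          (γ k (fun i => n (σ i)) (a, fun i => b (σ i)))))
    (X : Type) (k : ℕ) (p q : D k × (Fin k → DD D X))
    (h : OpRel D (DD D X) k p q) : muRaw D γ X k p = muRaw D γ X k q := by
  obtain ⟨a, y⟩ := p
  obtain ⟨a', y'⟩ := q
  obtain ⟨σ, h1, h2⟩ := h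
  simp only at h1 h2
  have hp2 : y = fun i => y' (σ i) := by
    funext i
    have := congrFun h2 (σ i)
    simp only [Function.comp, Equiv.symm_apply_apply] at this
    exact this
  subst hp2
  subst h1
  exact mkRes_outer D γ γ_perm_left X σ a (fun i => (y' i).1)
    (fun i => ((y' i).2.out).1) (fun i => ((y' i).2.out).2)

noncomputable def mu0
    (γ_perm_left : ∀ (k : ℕ) (n : Fin k → ℕ) (σ : Equiv.Perm (Fin k))
        (a : D k) (b : ∀ i, D (n i)),
      γ k n (σ • a, b) =
        blockPerm σ n • (cast (congrArg D (Equiv.sum_comp σ n))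
          (γ k (fun i => n (σ i)) (a, fun i => b (σ i)))))
    (X : Type) : DD D (DD D X) → DD D X :=
  fun P => Quot.lift (muRaw D γ X P.1) (fun p q h => muRaw_wd D γ γ_perm_left X P.1 p q h) P.2

theorem mu0_mk
    (γ_perm_left : ∀ (k : ℕ) (n : Fin k → ℕ) (σ : Equiv.Perm (Fin k))
        (a : D k) (b : ∀ i, D (n i)),
      γ k n (σ • a, b) =
        blockPerm σ n • (cast (congrArg D (Equiv.sum_comp σ n))
          (γ k (fun i => n (σ i)) (a, fun i => b (σ i)))))
    (γ_perm_right : ∀ (k : ℕ) (n : Fin k → ℕ) (τ : ∀ i, Equiv.Perm (Fin (n i)))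
        (a : D k) (b : ∀ i, D (n i)),
      γ k n (a, fun i => τ i • b i) = blockSum τ • γ k n (a, b))
    (X : Type) {k : ℕ} (a : D k) (n : Fin k → ℕ) (b : ∀ i, D (n i))
    (x : ∀ i, Fin (n i) → X) :
    mu0 D γ γ_perm_left X ⟨k, Quot.mk _ (a, fun i => (⟨n i, Quot.mk _ (b i, x i)⟩ : DD D X))⟩ =
      mkRes D γ X a n b x := by
  show muRaw D γ X k (a, fun i => (⟨n i, Quot.mk _ (b i, x i)⟩ : DD D X)) = _
  exact mkRes_inner D γ γ_perm_right X a n _ b _ x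
    (fun i => (quot_mk_eq_iff D X _ _).mp (Quot.out_eq _))

end Mu

/-- The multiplication of the monad associated to a Σ-free operad in `Set` is well defined
on the iterated quotients, and its naturality squares are pullbacks. -/
theorem DD_mul_welldefined_and_naturality_pullback
    (D : ℕ → Type) [∀ n, MulAction (Equiv.Perm (Fin n)) (D n)]
    (free : ∀ (n : ℕ) (σ : Equiv.Perm (Fin n)) (d : D n), σ • d = d → σ = 1)
    (γ : ∀ (k : ℕ) (n : Fin k → ℕ), D k × (∀ i, D (n i)) → D (∑ i, n i))
    (γ_perm_left : ∀ (k : ℕ) (n : Fin k → ℕ) (σ : Equiv.Perm (Fin k))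
        (a : D k) (b : ∀ i, D (n i)),
      γ k n (σ • a, b) =
        blockPerm σ n • (cast (congrArg D (Equiv.sum_comp σ n))
          (γ k (fun i => n (σ i)) (a, fun i => b (σ i)))))
    (γ_perm_right : ∀ (k : ℕ) (n : Fin k → ℕ) (τ : ∀ i, Equiv.Perm (Fin (n i)))
        (a : D k) (b : ∀ i, D (n i)),
      γ k n (a, fun i => τ i • b i) = blockSum τ • γ k n (a, b)) :
    ∃ μ : ∀ X : Type, DD D (DD D X) → DD D X,
      (∀ (X : Type) (k : ℕ) (a : D k) (n : Fin k → ℕ) (b : ∀ i, D (n i))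
          (x : ∀ i, Fin (n i) → X),
        μ X ⟨k, Quot.mk _ (a, fun i => (⟨n i, Quot.mk _ (b i, x i)⟩ : DD D X))⟩ =
          ⟨∑ i, n i, Quot.mk _ (γ k n (a, b),
            fun j => x ((finSigmaEquiv n).symm j).1 ((finSigmaEquiv n).symm j).2)⟩) ∧
      ∀ (X Y : Type) (f : X → Y),
        IsPB (μ X) (DDmap D (DDmap D f)) (DDmap D f) (μ Y) := by
  refine ⟨mu0 D γ γ_perm_left,
    fun X k a n b x => mu0_mk D γ γ_perm_left γ_perm_right X a n b x,
    fun X Y f => ⟨?_, ?_⟩⟩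
  · -- commutativity
    rintro ⟨k, Q⟩
    obtain ⟨⟨a, y⟩, rfl⟩ := Q.exists_rep
    obtain ⟨n, b, x, rfl⟩ := decomp D X y
    show DDmap D f (mu0 D γ γ_perm_left X
        ⟨k, Quot.mk _ (a, fun i => (⟨n i, Quot.mk _ (b i, x i)⟩ : DD D X))⟩) = _
    rw [mu0_mk D γ γ_perm_left γ_perm_right X a n b x]
    have hR : DDmap D (DDmap D f)
        ⟨k, Quot.mk _ (a, fun i => (⟨n i, Quot.mk _ (b i, x i)⟩ : DD D X))⟩
        = ⟨k, Quot.mk _ (a, fun i => (⟨n i, Quot.mk _ (b i, f ∘ x i)⟩ : DD D Y))⟩ := rfl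
    rw [hR, mu0_mk D γ γ_perm_left γ_perm_right Y a n b (fun i => f ∘ x i)]
    rfl
  · -- pullback
    intro p q h
    obtain ⟨k, Q⟩ := q
    obtain ⟨⟨A, Yf⟩, rfl⟩ := Q.exists_rep
    obtain ⟨n, B, ty, rfl⟩ := decomp D Y Yf
    rw [show mu0 D γ γ_perm_left Y
        ⟨k, Quot.mk _ (A, fun i => (⟨n i, Quot.mk _ (B i, ty i)⟩ : DD D Y))⟩
        = mkRes D γ Y A n B ty from
      mu0_mk D γ γ_perm_left γ_perm_right Y A n B ty] at h
    obtain ⟨x', rfl, hx'⟩ :=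
      ddmap_eq_mk D f p (∑ i, n i) (γ k n (A, B)) (concatX Y n ty) h
    refine ⟨⟨k, Quot.mk _ (A, fun i =>
        (⟨n i, Quot.mk _ (B i, blockX X n x' i)⟩ : DD D X))⟩, ⟨?_, ?_⟩, ?_⟩
    · rw [mu0_mk D γ γ_perm_left γ_perm_right X A n B (blockX X n x')]
      show mkRes D γ X A n B (blockX X n x') = _
      unfold mkRes
      rw [concat_block]
    · show (⟨k, Quot.mk _ (A, fun i =>
          (⟨n i, Quot.mk _ (B i, f ∘ blockX X n x' i)⟩ : DD D Y))⟩ : DD D (DD D Y)) = _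
      have key : (fun i => (⟨n i, Quot.mk _ (B i, f ∘ blockX X n x' i)⟩ : DD D Y))
          = fun i => (⟨n i, Quot.mk _ (B i, ty i)⟩ : DD D Y) := by
        funext i
        have hb : f ∘ blockX X n x' i = ty i := by
          have hb0 : f ∘ blockX X n x' i = blockX Y n (f ∘ x') i := rfl
          rw [hb0, hx', block_concat]
        rw [hb]
      rw [key]
    · rintro P ⟨hμ, hmap⟩
      obtain ⟨Z, rfl, hZf⟩ := ddmap_eq_mk D (DDmap D f) P k A
        (fun i => (⟨n i, Quot.mk _ (B i, ty i)⟩ : DD D Y)) hmap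
      have hi : ∀ i, ∃ ζ : Fin (n i) → X,
          Z i = ⟨n i, Quot.mk _ (B i, ζ)⟩ ∧ f ∘ ζ = ty i :=
        fun i => ddmap_eq_mk D f (Z i) (n i) (B i) (ty i) (congrFun hZf i)
      choose ζ hZ hfζ using hi
      have hZeq : Z = fun i => (⟨n i, Quot.mk _ (B i, ζ i)⟩ : DD D X) := funext hZ
      subst hZeq
      rw [mu0_mk D γ γ_perm_left γ_perm_right X A n B ζ] at hμ
      have h2 : Quot.mk (OpRel D X (∑ i, n i)) (γ k n (A, B), concatX X n ζ)
          = Quot.mk _ (γ k n (A, B), x') := eq_of_heq (Sigma.ext_iff.mp hμ).2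
      obtain ⟨ρ, hρ1, hρ2⟩ := (quot_mk_eq_iff D X _ _).mp h2
      have hρ : ρ = 1 := free _ ρ _ hρ1
      subst hρ
      have hcx : concatX X n ζ = x' := by
        funext j
        have := congrFun hρ2 j
        simpa [Equiv.Perm.one_def] using this
      have hz : ζ = blockX X n x' := by
        rw [← hcx]
        exact (block_concat X n ζ).symm
      subst hz
      rfl
end

section
/- Let f, g : A → B be functions between types admitting a common section s : B → A (f ∘ s = id and g ∘ s = id), and let h : B → C be a coequalizer of f and g in the category of types. Then for every natural number n, the maps (f ∘ ·), (g ∘ ·) : (Fin n → A) → (Fin n → B) given by postcomposition have (h ∘ ·) : (Fin n → B) → (Fin n → C) as a coequalizer in the category of types. (Finite powers preserve reflexive coequalizers of sets.) -/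
universe u

/-- `h : B → C` is a coequalizer of `f, g : A → B` in the category of types. -/
def IsCoeq {A B C : Type u} (f g : A → B) (h : B → C) : Prop :=
  h ∘ f = h ∘ g ∧ ∀ {W : Type u} (q : B → W), q ∘ f = q ∘ g → ∃! q' : C → W, q' ∘ h = q

/-- Finite powers preserve reflexive coequalizers of types. -/
theorem pow_preserves_reflexive_coequalizers
    {A B C : Type u} (f g : A → B) (s : B → A)
    (hsf : f ∘ s = id) (hsg : g ∘ s = id)
    (h : B → C) (hco : IsCoeq f g h) (n : ℕ) :
    IsCoeq (fun v : Fin n → A => f ∘ v) (fun v : Fin n → A => g ∘ v)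
      (fun v : Fin n → B => h ∘ v) := by
  obtain ⟨hfg, huniv⟩ := hco
  -- surjectivity of h
  have hsurj : Function.Surjective h := by
    obtain ⟨q', _, huq⟩ := huniv (W := ULift.{u} Prop) (fun _ => ⟨True⟩) rfl
    have h1 : (fun c => (⟨∃ b, h b = c⟩ : ULift Prop)) = q' := by
      apply huq
      funext b
      simp only [Function.comp]
      congr 1
      exact propext ⟨fun _ => trivial, fun _ => ⟨b, rfl⟩⟩
    have h2 : (fun _ : C => (⟨True⟩ : ULift Prop)) = q' := huq _ rfl
    intro c
    have e := congrFun (h1.trans h2.symm) c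
    have e2 : (∃ b, h b = c) = True := congrArg ULift.down e
    rw [e2]; trivial
  set r : B → B → Prop := fun b b' => ∃ a, f a = b ∧ g a = b' with hr
  have hmk : (Quot.mk r) ∘ f = (Quot.mk r) ∘ g := by
    funext a; exact Quot.sound ⟨a, rfl, rfl⟩
  obtain ⟨p, hp, _⟩ := huniv (Quot.mk r) hmk
  have hiff : ∀ b b', h b = h b' → Relation.EqvGen r b b' := by
    intro b b' hbb
    have : Quot.mk r b = Quot.mk r b' := by
      have e1 := congrFun hp b
      have e2 := congrFun hp b'
      simp only [Function.comp] at e1 e2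
      rw [← e1, ← e2, hbb]
    exact Quot.eq.mp this
  have key : ∀ {W : Type u} (q : (Fin n → B) → W),
      q ∘ (fun v : Fin n → A => f ∘ v) = q ∘ (fun v : Fin n → A => g ∘ v) →
      ∀ v w : Fin n → B, (∀ i, h (v i) = h (w i)) → q v = q w := by
    intro W q hq v w hvw
    have single : ∀ b b', Relation.EqvGen r b b' → ∀ (u : Fin n → B) (i : Fin n),
        q (Function.update u i b) = q (Function.update u i b') := by
      intro b b' hbb
      induction hbb with
      | rel b b' hrel =>
        obtain ⟨a, rfl, rfl⟩ := hrel
        intro u i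
        have hf1 : f ∘ (Function.update (fun j => s (u j)) i a) = Function.update u i (f a) := by
          funext j
          by_cases hj : j = i
          · subst hj; simp
          · simp only [Function.comp, Function.update_of_ne hj]
            exact congrFun hsf (u j)
        have hg1 : g ∘ (Function.update (fun j => s (u j)) i a) = Function.update u i (g a) := by
          funext j
          by_cases hj : j = i
          · subst hj; simp
          · simp only [Function.comp, Function.update_of_ne hj]
            exact congrFun hsg (u j)
        calc q (Function.update u i (f a)) = q (f ∘ (Function.update (fun j => s (u j)) i a)) := by
              rw [hf1]
          _ = q (g ∘ (Function.update (fun j => s (u j)) i a)) :=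
              congrFun hq (Function.update (fun j => s (u j)) i a)
          _ = q (Function.update u i (g a)) := by rw [hg1]
      | refl b => intro u i; rfl
      | symm x y _ ih => intro u i; exact (ih u i).symm
      | trans x y z _ _ ih1 ih2 => intro u i; exact (ih1 u i).trans (ih2 u i)
    have main : ∀ t : Finset (Fin n), ∀ w : Fin n → B, (∀ i, h (v i) = h (w i)) →
        (∀ i ∉ t, v i = w i) → q v = q w := by
      intro t
      induction t using Finset.induction with
      | empty =>
        intro w _ hout
        have : v = w := funext fun i => hout i (Finset.notMem_empty i)
        rw [this]
      | @insert i t hit ih =>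
        intro w hhw hout
        set w' := Function.update w i (v i) with hw'
        have step1 : q v = q w' := by
          apply ih
          · intro j
            by_cases hj : j = i
            · subst hj; rw [hw', Function.update_self]
            · rw [hw', Function.update_of_ne hj]; exact hhw j
          · intro j hjt
            by_cases hj : j = i
            · subst hj; rw [hw', Function.update_self]
            · rw [hw', Function.update_of_ne hj]
              exact hout j (by simp [hj, hjt])
        have step2 : q w' = q w := by
          have := single (v i) (w i) (hiff _ _ (hhw i)) w i
          rw [hw']
          rw [this, Function.update_eq_self]
        exact step1.trans step2
    exact main Finset.univ w hvw (fun i hi => absurd (Finset.mem_univ i) hi)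
  constructor
  · funext v
    funext i
    exact congrFun hfg (v i)
  · intro W q hq
    have hinv := Function.rightInverse_surjInv hsurj
    refine ⟨fun u => q (fun i => Function.surjInv hsurj (u i)), ?_, ?_⟩
    · funext v
      exact key q hq _ v (fun i => hinv (h (v i)))
    · intro q'' hq''
      funext u
      have hu : (fun v : Fin n → B => h ∘ v) (fun i => Function.surjInv hsurj (u i)) = u := by
        funext i; exact hinv (u i)
      calc q'' u = q'' ((fun v : Fin n → B => h ∘ v) (fun i => Function.surjInv hsurj (u i))) := by
            rw [hu]
        _ = q (fun i => Function.surjInv hsurj (u i)) := congrFun hq'' _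
end
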